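/- Assume every x ∈ T has at least two successors. The following are equivalent: (i) the metric measure space (∂T, ρ, ν) is doubling, i.e. there exists C > 0 such that ν(B_ρ(ω, 2r)) ≤ C ν(B_ρ(ω, r)) for every ω ∈ ∂T and r > 0; (ii) there exists C' > 0 such that m_ν(p(x)) ≤ C' m_ν(x) for every x ∈ T. -/

import Mathlib

open MeasureTheory
open scoped ENNReal NNReal

/-- The punctured boundary `∂T` of the tree: maps `ω : ℤ → T` with `lev (ω j) = j`
and `par (ω j) = ω (j+1)`. -/
def PBoundary {T : Type*} (par : T → T) (lev : T → ℤ) : Type _ :=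
  {ω : ℤ → T // (∀ j : ℤ, lev (ω j) = j) ∧ ∀ j : ℤ, par (ω j) = ω (j + 1)}

/-- The boundary sector `∂T_x`. -/
def sector {T : Type*} (par : T → T) (lev : T → ℤ) (x : T) : Set (PBoundary par lev) :=
  {ω : PBoundary par lev | ω.1 (lev x) = x}

/-- The σ-algebra on `∂T` generated by the sectors. -/
instance {T : Type*} (par : T → T) (lev : T → ℤ) : MeasurableSpace (PBoundary par lev) :=
  MeasurableSpace.generateFrom (Set.range (sector par lev))

/-- The flow measure `m_ν x = ν (∂T_x)` (as a real number). -/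
noncomputable def mnu {T : Type*} (par : T → T) (lev : T → ℤ)
    (ν : Measure (PBoundary par lev)) (x : T) : ℝ :=
  (ν (sector par lev x)).toReal

/-- The Gromov distance on `∂T`: `ρ(ω,ξ) = e^{j₀}` where `j₀` is the least level at which
`ω` and `ξ` agree (and `0` if `ω = ξ`). -/
noncomputable def grho {T : Type*} (par : T → T) (lev : T → ℤ)
    (ω ξ : PBoundary par lev) : ℝ :=
  @ite _ (ω = ξ) (Classical.dec _) 0 (sInf {r : ℝ | ∃ j : ℤ, ω.1 j = ξ.1 j ∧ r = Real.exp j})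

/-- The ball of the Gromov distance. -/
def gball {T : Type*} (par : T → T) (lev : T → ℤ)
    (ω : PBoundary par lev) (r : ℝ) : Set (PBoundary par lev) :=
  {ξ : PBoundary par lev | grho par lev ω ξ ≤ r}

section Aux
variable {T : Type*} (par : T → T) (lev : T → ℤ)

lemma lev_iter (hlev : ∀ x : T, lev (par x) = lev x + 1) (x : T) (n : ℕ) :
    lev (par^[n] x) = lev x + n := by
  induction n with
  | zero => simp
  | succ n ih => rw [Function.iterate_succ_apply', hlev, ih]; push_cast; ring

lemma omega_iter (ω : PBoundary par lev) (j : ℤ) (n : ℕ) :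
    par^[n] (ω.1 j) = ω.1 (j + n) := by
  induction n with
  | zero => simp
  | succ n ih =>
    rw [Function.iterate_succ_apply', ih, ω.2.2]
    congr 1; push_cast; ring

lemma agree_mono (ω ξ : PBoundary par lev) {j j' : ℤ} (h : j ≤ j')
    (hj : ω.1 j = ξ.1 j) : ω.1 j' = ξ.1 j' := by
  have hn : j + ((j' - j).toNat : ℤ) = j' := by omega
  rw [← hn, ← omega_iter par lev ω, ← omega_iter par lev ξ, hj]

lemma agree_exists (hconn : ∀ x y : T, ∃ n m : ℕ, par^[n] x = par^[m] y)
    (ω ξ : PBoundary par lev) : ∃ j, ω.1 j = ξ.1 j := by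
  obtain ⟨n, m, h⟩ := hconn (ω.1 0) (ξ.1 0)
  rw [omega_iter par lev ω, omega_iter par lev ξ] at h
  have h1 : lev (ω.1 (0 + (n : ℤ))) = 0 + n := ω.2.1 _
  have h2 : lev (ξ.1 (0 + (m : ℤ))) = 0 + m := ξ.2.1 _
  rw [h] at h1
  have hnm : (n : ℤ) = m := by omega
  exact ⟨0 + (n : ℤ), by rw [h, hnm]⟩

lemma grho_spec (hconn : ∀ x y : T, ∃ n m : ℕ, par^[n] x = par^[m] y)
    (ω ξ : PBoundary par lev) (h : ω ≠ ξ) :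
    ∃ jm : ℤ, ω.1 jm = ξ.1 jm ∧ (∀ j, ω.1 j = ξ.1 j → jm ≤ j) ∧
      grho par lev ω ξ = Real.exp jm := by
  have hbdd : ∃ b : ℤ, ∀ j, ω.1 j = ξ.1 j → b ≤ j := by
    by_contra hb
    push_neg at hb
    apply h
    apply Subtype.ext; funext j
    obtain ⟨j', hagree, hlt⟩ := hb j
    exact agree_mono par lev ω ξ hlt.le hagree
  obtain ⟨jm, hjm, hmin⟩ := Int.exists_least_of_bdd hbdd (agree_exists par lev hconn ω ξ)
  refine ⟨jm, hjm, hmin, ?_⟩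
  unfold grho
  rw [if_neg h]
  apply IsLeast.csInf_eq
  constructor
  · exact ⟨jm, hjm, rfl⟩
  · rintro r ⟨j, hj, rfl⟩
    exact Real.exp_le_exp.2 (by exact_mod_cast hmin j hj)

lemma gball_eq (hconn : ∀ x y : T, ∃ n m : ℕ, par^[n] x = par^[m] y)
    (ω : PBoundary par lev) {r : ℝ} (hr : 0 < r) :
    gball par lev ω r = sector par lev (ω.1 ⌊Real.log r⌋) := by
  ext ξ
  have hsec : ξ ∈ sector par lev (ω.1 ⌊Real.log r⌋) ↔
      ξ.1 ⌊Real.log r⌋ = ω.1 ⌊Real.log r⌋ := by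
    simp [sector, ω.2.1]
  by_cases he : ω = ξ
  · subst he
    simp only [gball, Set.mem_setOf_eq, hsec]
    unfold grho
    rw [if_pos rfl]
    simp [hr.le]
  · obtain ⟨jm, hjm, hmin, hval⟩ := grho_spec par lev hconn ω ξ he
    simp only [gball, Set.mem_setOf_eq, hval, hsec]
    constructor
    · intro hle
      have h1 : (jm : ℝ) ≤ Real.log r := (Real.le_log_iff_exp_le hr).2 hle
      have h2 : jm ≤ ⌊Real.log r⌋ := Int.le_floor.2 h1
      exact (agree_mono par lev ω ξ h2 hjm).symm
    · intro hag
      have h2 : jm ≤ ⌊Real.log r⌋ := hmin _ hag.symm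
      calc Real.exp jm ≤ Real.exp (Real.log r) :=
            Real.exp_le_exp.2 (le_trans (by exact_mod_cast h2) (Int.floor_le _))
        _ = r := Real.exp_log hr

lemma exists_through (hlev : ∀ x : T, lev (par x) = lev x + 1)
    (hsucc : ∀ x : T, ∃ y : T, par y = x) (x : T) :
    ∃ ω : PBoundary par lev, ω.1 (lev x) = x := by
  choose s hs using hsucc
  have hlevs : ∀ n : ℕ, lev (s^[n] x) = lev x - n := by
    intro n
    induction n with
    | zero => simp
    | succ n ih =>
      rw [Function.iterate_succ_apply']
      have h1 := hlev (s (s^[n] x))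
      rw [hs] at h1
      push_cast
      omega
  set f : ℤ → T := fun j =>
    if lev x ≤ j then par^[(j - lev x).toNat] x else s^[(lev x - j).toNat] x with hf
  have hflev : ∀ j, lev (f j) = j := by
    intro j
    by_cases h1 : lev x ≤ j
    · rw [hf]; simp only [if_pos h1]; rw [lev_iter par lev hlev]; omega
    · rw [hf]; simp only [if_neg h1]; rw [hlevs]; omega
  have hfpar : ∀ j, par (f j) = f (j + 1) := by
    intro j
    by_cases h1 : lev x ≤ j
    · rw [hf]
      simp only [if_pos h1, if_pos (by omega : lev x ≤ j + 1)]
      rw [← Function.iterate_succ_apply' par]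
      congr 1
      omega
    · by_cases h2 : lev x ≤ j + 1
      · have e1 : (lev x - j).toNat = 1 := by omega
        have e2 : (j + 1 - lev x).toNat = 0 := by omega
        rw [hf]
        simp only [if_neg h1, if_pos h2, e1, e2, Function.iterate_one,
          Function.iterate_zero, id_eq, hs]
      · have e1 : (lev x - j).toNat = (lev x - (j + 1)).toNat + 1 := by omega
        rw [hf]
        simp only [if_neg h1, if_neg h2, e1, Function.iterate_succ_apply', hs]
  refine ⟨⟨f, hflev, hfpar⟩, ?_⟩
  show f (lev x) = x
  rw [hf]
  simp

end Aux

/-- `(∂T, ρ, ν)` is doubling if and only if `(T, d, m_ν)` is locally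
doubling, i.e. `m_ν(p(x)) ≤ C' m_ν(x)` uniformly. -/
theorem stmt15 {T : Type*} [Nonempty T] (par : T → T) (lev : T → ℤ)
    (hlev : ∀ x : T, lev (par x) = lev x + 1)
    (hfin : ∀ x : T, {y : T | par y = x}.Finite)
    (hsucc : ∀ x : T, ∃ y : T, par y = x)
    (hconn : ∀ x y : T, ∃ n m : ℕ, par^[n] x = par^[m] y)
    (htwo : ∀ x : T, ∃ y z : T, y ≠ z ∧ par y = x ∧ par z = x)
    (ν : Measure (PBoundary par lev))
    (hν : ∀ x : T, 0 < ν (sector par lev x) ∧ ν (sector par lev x) < ⊤) :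
    (∃ C : ℝ, 0 < C ∧ ∀ (ω : PBoundary par lev) (r : ℝ), 0 < r →
        ν (gball par lev ω (2 * r)) ≤ ENNReal.ofReal C * ν (gball par lev ω r))
      ↔ ∃ C' : ℝ, 0 < C' ∧ ∀ x : T, mnu par lev ν (par x) ≤ C' * mnu par lev ν x := by
  have hlog2a : (0.6931471803 : ℝ) < Real.log 2 := Real.log_two_gt_d9
  have hlog2b : Real.log 2 < 0.6931471808 := Real.log_two_lt_d9
  constructor
  · rintro ⟨C, hC, hd⟩
    refine ⟨C, hC, fun x => ?_⟩
    obtain ⟨ω, hω⟩ := exists_through par lev hlev hsucc x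
    set r : ℝ := Real.exp ((lev x : ℝ) + 1/2) with hrdef
    have hr : 0 < r := Real.exp_pos _
    have hfr : ⌊Real.log r⌋ = lev x := by
      rw [hrdef, Real.log_exp, Int.floor_intCast_add]
      norm_num
    have hfr2 : ⌊Real.log (2 * r)⌋ = lev x + 1 := by
      rw [Real.log_mul two_ne_zero hr.ne', hrdef, Real.log_exp]
      have : Real.log 2 + ((lev x : ℝ) + 1/2) = (lev x : ℝ) + (Real.log 2 + 1/2) := by ring
      rw [this, Int.floor_intCast_add]
      have h1 : ⌊Real.log 2 + 1/2⌋ = 1 := by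
        rw [Int.floor_eq_iff]
        constructor <;> push_cast <;> linarith
      rw [h1]
    have hb1 := gball_eq par lev hconn ω hr
    rw [hfr, hω] at hb1
    have hb2 := gball_eq par lev hconn ω (by linarith : (0:ℝ) < 2 * r)
    have hpx : ω.1 (lev x + 1) = par x := by
      rw [← ω.2.2 (lev x), hω]
    rw [hfr2, hpx] at hb2
    have key := hd ω r hr
    rw [hb1, hb2] at key
    have hfin1 : ν (sector par lev (par x)) ≠ ⊤ := (hν _).2.ne
    have hfin2 : ENNReal.ofReal C * ν (sector par lev x) ≠ ⊤ :=
      ENNReal.mul_ne_top ENNReal.ofReal_ne_top (hν x).2.ne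
    have := (ENNReal.toReal_le_toReal hfin1 hfin2).2 key
    rwa [ENNReal.toReal_mul, ENNReal.toReal_ofReal hC.le] at this
  · rintro ⟨C', hC', hloc⟩
    refine ⟨max C' 1, by positivity, fun ω r hr => ?_⟩
    have h2r : (0:ℝ) < 2 * r := by linarith
    rw [gball_eq par lev hconn ω hr, gball_eq par lev hconn ω h2r]
    set j : ℤ := ⌊Real.log r⌋ with hj
    have hlog : Real.log (2 * r) = Real.log r + Real.log 2 := by
      rw [Real.log_mul two_ne_zero hr.ne']; ring
    have hjle : j ≤ ⌊Real.log (2 * r)⌋ := Int.floor_mono (by rw [hlog]; linarith)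
    have hjge : ⌊Real.log (2 * r)⌋ ≤ j + 1 := by
      have : ⌊Real.log (2 * r)⌋ ≤ ⌊Real.log r + 1⌋ :=
        Int.floor_mono (by rw [hlog]; linarith)
      rwa [Int.floor_add_one] at this
    have hone : (1 : ℝ≥0∞) ≤ ENNReal.ofReal (max C' 1) :=
      ENNReal.one_le_ofReal.2 (le_max_right _ _)
    rcases eq_or_lt_of_le hjle with heq | hlt
    · rw [← heq]
      exact le_mul_of_one_le_left zero_le hone
    · have heq2 : ⌊Real.log (2 * r)⌋ = j + 1 := by omega
      rw [heq2]
      have hpar : ω.1 (j + 1) = par (ω.1 j) := (ω.2.2 j).symm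
      rw [hpar]
      have hre := hloc (ω.1 j)
      have e1 : ν (sector par lev (par (ω.1 j)))
          = ENNReal.ofReal (mnu par lev ν (par (ω.1 j))) :=
        (ENNReal.ofReal_toReal (hν _).2.ne).symm
      have e2 : ν (sector par lev (ω.1 j)) = ENNReal.ofReal (mnu par lev ν (ω.1 j)) :=
        (ENNReal.ofReal_toReal (hν _).2.ne).symm
      calc ν (sector par lev (par (ω.1 j)))
          = ENNReal.ofReal (mnu par lev ν (par (ω.1 j))) := e1
        _ ≤ ENNReal.ofReal (C' * mnu par lev ν (ω.1 j)) := ENNReal.ofReal_le_ofReal hre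
        _ = ENNReal.ofReal C' * ENNReal.ofReal (mnu par lev ν (ω.1 j)) :=
            ENNReal.ofReal_mul hC'.le
        _ = ENNReal.ofReal C' * ν (sector par lev (ω.1 j)) := by rw [e2]
        _ ≤ ENNReal.ofReal (max C' 1) * ν (sector par lev (ω.1 j)) :=
            mul_le_mul_left (ENNReal.ofReal_le_ofReal (le_max_left _ _)) _
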